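/- Let P_ε, Θ ∈ ℝ^{N×N} with P_ε·1 = P_εᵀ·1 = 1 and Θ·1 = Θᵀ·1 = 0. Then lim_{k→∞} (P_ε+Θ)^k x(0) = x̄(0)·1 for all x(0) ∈ ℝ^N (average-consensus) if and only if ρ(P_ε + Θ − (1/N)·1·1ᵀ) < 1. -/

import Mathlib

open Matrix Filter

/-- Spectral radius of a real matrix: supremum of moduli of its complex eigenvalues. -/
noncomputable def specRad {n : ℕ} (M : Matrix (Fin n) (Fin n) ℝ) : ℝ :=
  sSup {r : ℝ | ∃ μ : ℂ, (M.map (fun x : ℝ => (x : ℂ))).charpoly.IsRoot μ ∧ r = ‖μ‖}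

section Aux

open Polynomial

attribute [local instance] Matrix.linftyOpNormedRing Matrix.linftyOpNormedAlgebra

lemma charpoly_eval_eq' {n : ℕ} (M : Matrix (Fin n) (Fin n) ℂ) (μ : ℂ) :
    M.charpoly.eval μ = (Matrix.diagonal (fun _ => μ) - M).det := by
  rw [Matrix.charpoly, eval_det, Matrix.matPolyEquiv_charmatrix]
  simp [Matrix.scalar_apply]

lemma root_iff_eigvec' {n : ℕ} (M : Matrix (Fin n) (Fin n) ℂ) (μ : ℂ) :
    M.charpoly.IsRoot μ ↔ ∃ v ≠ 0, M *ᵥ v = μ • v := by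
  rw [Polynomial.IsRoot, charpoly_eval_eq', ← Matrix.exists_mulVec_eq_zero_iff]
  refine exists_congr fun v => and_congr_right fun hv => ?_
  have hd : (Matrix.diagonal fun _ => μ) *ᵥ v = μ • v := by
    ext i; simp [Matrix.mulVec_diagonal]
  rw [Matrix.sub_mulVec, sub_eq_zero, hd, eq_comm]

lemma mem_spectrum_iff_root' {n : ℕ} (M : Matrix (Fin n) (Fin n) ℂ) (μ : ℂ) :
    μ ∈ spectrum ℂ M ↔ M.charpoly.IsRoot μ := by
  rw [spectrum.mem_iff, Polynomial.IsRoot, charpoly_eval_eq',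
    Matrix.isUnit_iff_isUnit_det, isUnit_iff_ne_zero, not_ne_iff,
    Matrix.algebraMap_eq_diagonal]
  have : (algebraMap ℂ (Fin n → ℂ)) μ = fun _ => μ := rfl
  rw [this]

lemma specRad_set_eq' {n : ℕ} (M : Matrix (Fin n) (Fin n) ℝ) :
    {r : ℝ | ∃ μ : ℂ, (M.map (fun x : ℝ => (x : ℂ))).charpoly.IsRoot μ ∧ r = ‖μ‖}
      = (fun μ : ℂ => ‖μ‖) '' {μ : ℂ | (M.map (fun x : ℝ => (x : ℂ))).charpoly.IsRoot μ} := by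
  ext r
  simp only [Set.mem_setOf_eq, Set.mem_image, eq_comm]

lemma specRad_set_finite' {n : ℕ} (M : Matrix (Fin n) (Fin n) ℝ) :
    {r : ℝ | ∃ μ : ℂ, (M.map (fun x : ℝ => (x : ℂ))).charpoly.IsRoot μ ∧
      r = ‖μ‖}.Finite := by
  rw [specRad_set_eq']
  exact (Polynomial.finite_setOf_isRoot (Matrix.charpoly_monic _).ne_zero).image _

lemma abs_le_specRad' {n : ℕ} (M : Matrix (Fin n) (Fin n) ℝ) {μ : ℂ}
    (h : (M.map (fun x : ℝ => (x : ℂ))).charpoly.IsRoot μ) : ‖μ‖ ≤ specRad M :=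
  le_csSup (specRad_set_finite' M).bddAbove ⟨μ, h, rfl⟩

lemma entry_norm_le' {n : ℕ} (A : Matrix (Fin n) (Fin n) ℂ) (i j : Fin n) : ‖A i j‖ ≤ ‖A‖ := by
  have h : ‖A i j‖₊ ≤ ‖A‖₊ := by
    rw [Matrix.linfty_opNNNorm_def]
    exact le_trans
      (Finset.single_le_sum (f := fun j => ‖A i j‖₊) (fun _ _ => zero_le) (Finset.mem_univ j))
      (Finset.le_sup (f := fun i => ∑ j, ‖A i j‖₊) (Finset.mem_univ i))
  exact h

lemma map_pow_entry' {n : ℕ} (B : Matrix (Fin n) (Fin n) ℝ) (k : ℕ) :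
    (B.map (fun x : ℝ => (x : ℂ))) ^ k = (B ^ k).map (fun x : ℝ => (x : ℂ)) := by
  have h : ∀ M : Matrix (Fin n) (Fin n) ℝ,
      M.map (fun x : ℝ => (x : ℂ)) = Complex.ofRealHom.mapMatrix M := fun _ => rfl
  rw [h, h, ← map_pow]

/-- If the spectral radius is `< 1`, the powers tend to zero entrywise. -/
lemma pow_entries_tendsto_of_specRad_lt' {n : ℕ} (B : Matrix (Fin n) (Fin n) ℝ)
    (h : specRad B < 1) (i j : Fin n) :
    Tendsto (fun k => (B ^ k) i j) atTop (nhds 0) := by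
  set C : Matrix (Fin n) (Fin n) ℂ := B.map (fun x : ℝ => (x : ℂ)) with hCdef
  have hρ : spectralRadius ℂ C < 1 := by
    have hle : spectralRadius ℂ C ≤ ENNReal.ofReal (specRad B) := by
      rw [spectralRadius]
      refine iSup₂_le fun μ hμ => ?_
      have h1 : ‖μ‖ ≤ specRad B :=
        abs_le_specRad' B ((mem_spectrum_iff_root' C μ).mp hμ)
      rw [← ENNReal.ofReal_coe_nnreal, coe_nnnorm]
      exact ENNReal.ofReal_le_ofReal (le_trans (le_of_eq rfl) h1)
    exact lt_of_le_of_lt hle (by rwa [ENNReal.ofReal_lt_one])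
  obtain ⟨c, hc1, hc2⟩ := ENNReal.lt_iff_exists_nnreal_btwn.mp hρ
  have hc2' : c < 1 := by exact_mod_cast hc2
  have hG := spectrum.pow_nnnorm_pow_one_div_tendsto_nhds_spectralRadius C
  have hev : ∀ᶠ k : ℕ in atTop, (‖C ^ k‖₊ : ENNReal) ^ (1/(k:ℝ)) < (c : ENNReal) :=
    hG.eventually_lt_const hc1
  have hbound : ∀ᶠ k : ℕ in atTop, ‖(B ^ k) i j‖ ≤ (c : ℝ) ^ k := by
    filter_upwards [hev, Filter.eventually_ge_atTop 1] with k hk hk1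
    have hk0 : (k : ℝ) ≠ 0 := by positivity
    have h2 := ENNReal.rpow_le_rpow hk.le (by positivity : (0:ℝ) ≤ (k:ℝ))
    rw [← ENNReal.rpow_mul, one_div, inv_mul_cancel₀ hk0, ENNReal.rpow_one,
      ENNReal.rpow_natCast, ← ENNReal.coe_pow, ENNReal.coe_le_coe] at h2
    have h3 : ‖C ^ k‖ ≤ (c : ℝ) ^ k := by exact_mod_cast h2
    have h4 : ‖(C ^ k) i j‖ ≤ ‖C ^ k‖ := entry_norm_le' _ i j
    have h5 : (C ^ k) i j = (((B ^ k) i j : ℝ) : ℂ) := by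
      rw [hCdef, map_pow_entry']; rfl
    rw [h5, Complex.norm_real] at h4
    exact le_trans h4 h3
  have hpow : Tendsto (fun k : ℕ => (c : ℝ) ^ k) atTop (nhds 0) :=
    tendsto_pow_atTop_nhds_zero_of_lt_one c.coe_nonneg (by exact_mod_cast hc2')
  exact squeeze_zero_norm' hbound hpow

/-- If the powers tend to zero entrywise, the spectral radius is `< 1`. -/
lemma specRad_lt_of_pow_entries_tendsto' {n : ℕ} (hn : 0 < n) (B : Matrix (Fin n) (Fin n) ℝ)
    (h : ∀ i j, Tendsto (fun k => (B ^ k) i j) atTop (nhds 0)) : specRad B < 1 := by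
  set C : Matrix (Fin n) (Fin n) ℂ := B.map (fun x : ℝ => (x : ℂ)) with hCdef
  have hfin := specRad_set_finite' B
  have hne : {r : ℝ | ∃ μ : ℂ, C.charpoly.IsRoot μ ∧ r = ‖μ‖}.Nonempty := by
    have hdeg : C.charpoly.natDegree = n := by
      rw [Matrix.charpoly_natDegree_eq_dim, Fintype.card_fin]
    have hd0 : 0 < C.charpoly.degree := by
      refine Polynomial.natDegree_pos_iff_degree_pos.mp ?_
      rw [hdeg]; exact hn
    obtain ⟨μ, hμ⟩ := Complex.exists_root hd0
    exact ⟨‖μ‖, μ, hμ, rfl⟩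
  have hmem := hne.csSup_mem hfin
  obtain ⟨μ, hroot, hr⟩ := hmem
  rw [specRad, hr]
  obtain ⟨v, hv, hev⟩ := (root_iff_eigvec' C μ).mp hroot
  obtain ⟨i, hvi⟩ := Function.ne_iff.mp hv
  simp only [Pi.zero_apply] at hvi
  have hpowv : ∀ k, (C ^ k) *ᵥ v = μ ^ k • v := by
    intro k
    induction k with
    | zero => simp
    | succ m ih =>
      rw [pow_succ', pow_succ', ← Matrix.mulVec_mulVec, ih, Matrix.mulVec_smul, hev,
        smul_smul, mul_comm]
  have hten : Tendsto (fun k => ((C ^ k) *ᵥ v) i) atTop (nhds 0) := by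
    have : ∀ k, ((C ^ k) *ᵥ v) i = ∑ j, (((B ^ k) i j : ℝ) : ℂ) * v j := by
      intro k
      rw [Matrix.mulVec, dotProduct]
      congr 1
      ext j
      congr 1
      rw [hCdef, map_pow_entry']; rfl
    simp only [this]
    have h0 : (0 : ℂ) = ∑ _j : Fin n, 0 := by simp
    rw [h0]
    refine tendsto_finset_sum _ fun j _ => ?_
    have hj : Tendsto (fun k => (((B ^ k) i j : ℝ) : ℂ)) atTop (nhds 0) := by
      have := (Complex.continuous_ofReal.tendsto 0).comp (h i j)
      simpa [Function.comp_def] using this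
    simpa using hj.mul_const (v j)
  have hμk : Tendsto (fun k => μ ^ k * v i) atTop (nhds 0) := by
    have : ∀ k, ((C ^ k) *ᵥ v) i = μ ^ k * v i := by
      intro k; rw [hpowv k]; simp [Pi.smul_apply, smul_eq_mul]
    simpa [this] using hten
  have hμ0 : Tendsto (fun k => μ ^ k) atTop (nhds 0) := by
    have h2 := hμk.mul_const (v i)⁻¹
    simp only [zero_mul] at h2
    refine h2.congr fun k => ?_
    rw [mul_assoc, mul_inv_cancel₀ hvi, mul_one]
  have habs : Tendsto (fun k => ‖μ‖ ^ k) atTop (nhds 0) := by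
    have h2 : Tendsto (fun k => ‖μ ^ k‖) atTop (nhds 0) := by
      have h3 := (continuous_norm.tendsto (0:ℂ)).comp hμ0
      simp only [Function.comp_def, norm_zero] at h3
      exact h3
    simpa [norm_pow] using h2
  have : |‖μ‖| < 1 := tendsto_pow_atTop_nhds_zero_iff.mp habs
  calc ‖μ‖ ≤ |‖μ‖| := le_abs_self _
    _ < 1 := this

end Aux

/-- Partial-link MPC consensus condition: with `P_ε·1 = P_εᵀ·1 = 1` and
`Θ·1 = Θᵀ·1 = 0`, average-consensus `(P_ε+Θ)^k x(0) → x̄(0)·1` holds for all `x(0)`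
iff `ρ(P_ε + Θ − (1/N)·1·1ᵀ) < 1`. -/
theorem partial_link_consensus_iff {N : ℕ} (hN : 0 < N) (P Θ : Matrix (Fin N) (Fin N) ℝ)
    (hP1 : P *ᵥ (fun _ => 1) = (fun _ => 1))
    (hP2 : Matrix.vecMul (fun _ => 1) P = (fun _ => 1))
    (hT1 : Θ *ᵥ (fun _ => 1) = 0)
    (hT2 : Matrix.vecMul (fun _ => 1) Θ = 0) :
    (∀ x0 : Fin N → ℝ, ∀ i, Tendsto (fun k => (((P + Θ) ^ k) *ᵥ x0) i) atTop
      (nhds ((N : ℝ)⁻¹ * ∑ j, x0 j))) ↔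
    specRad (P + Θ - Matrix.of fun _ _ => (N : ℝ)⁻¹) < 1 := by
  have hNR : (N : ℝ) ≠ 0 := Nat.cast_ne_zero.mpr hN.ne'
  set A : Matrix (Fin N) (Fin N) ℝ := P + Θ with hAdef
  set J : Matrix (Fin N) (Fin N) ℝ := Matrix.of fun _ _ => (N : ℝ)⁻¹ with hJdef
  set B : Matrix (Fin N) (Fin N) ℝ := A - J with hBdef
  -- row and column sums of A
  have hA1 : ∀ i, ∑ k, A i k = 1 := by
    intro i
    have := congrFun (by rw [hAdef, Matrix.add_mulVec, hP1, hT1, add_zero] :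
      A *ᵥ (fun _ => (1:ℝ)) = (fun _ => 1)) i
    simpa [Matrix.mulVec, dotProduct] using this
  have hA2 : ∀ j, ∑ k, A k j = 1 := by
    intro j
    have := congrFun (by rw [hAdef, Matrix.vecMul_add, hP2, hT2, add_zero] :
      Matrix.vecMul (fun _ => (1:ℝ)) A = (fun _ => 1)) j
    simpa [Matrix.vecMul, dotProduct] using this
  have hAJ : A * J = J := by
    ext i j
    simp only [Matrix.mul_apply, hJdef, Matrix.of_apply, ← Finset.sum_mul, hA1 i, one_mul]
  have hJA : J * A = J := by
    ext i j
    simp only [Matrix.mul_apply, hJdef, Matrix.of_apply, ← Finset.mul_sum, hA2 j, mul_one]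
  have hJJ : J * J = J := by
    ext i j
    simp only [Matrix.mul_apply, hJdef, Matrix.of_apply, Finset.sum_const, Finset.card_univ,
      Fintype.card_fin, nsmul_eq_mul]
    field_simp
  have hJApow : ∀ k, J * A ^ k = J := by
    intro k
    induction k with
    | zero => simp
    | succ m ih => rw [pow_succ, ← mul_assoc, ih]; exact hJA
  have hApowJ : ∀ k, A ^ k * J = J := by
    intro k
    induction k with
    | zero => simp
    | succ m ih => rw [pow_succ, mul_assoc, hAJ]; exact ih
  have hBpow : ∀ k, 1 ≤ k → B ^ k = A ^ k - J := by
    intro k hk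
    obtain ⟨m, rfl⟩ := Nat.exists_eq_add_of_le hk
    clear hk
    induction m with
    | zero => simp [hBdef]
    | succ m ih =>
      have : 1 + (m + 1) = (1 + m) + 1 := by ring
      rw [this, pow_succ, pow_succ, ih, hBdef, Matrix.sub_mul, Matrix.mul_sub, Matrix.mul_sub,
        hApowJ, hJA, hJJ, sub_self, sub_zero]
  have hJv : ∀ (x0 : Fin N → ℝ) i, (J *ᵥ x0) i = (N : ℝ)⁻¹ * ∑ j, x0 j := by
    intro x0 i
    simp [hJdef, Matrix.mulVec, dotProduct, Finset.mul_sum]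
  constructor
  · intro hcons
    refine specRad_lt_of_pow_entries_tendsto' hN B fun i j => ?_
    have h1 := hcons (Pi.single j 1) i
    have hsum : ∑ j', Pi.single j (1:ℝ) j' = 1 := by
      simp [Finset.sum_pi_single]
    rw [hsum, mul_one] at h1
    have h2 : Tendsto (fun k => ((A ^ k) *ᵥ Pi.single j 1) i - (N:ℝ)⁻¹) atTop (nhds 0) := by
      simpa using h1.sub_const ((N:ℝ)⁻¹)
    refine h2.congr' ?_
    filter_upwards [Filter.eventually_ge_atTop 1] with k hk
    rw [hBpow k hk]
    simp [Matrix.sub_apply, Matrix.mulVec_single, hJdef]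
  · intro hρ x0 i
    have hent := pow_entries_tendsto_of_specRad_lt' B hρ
    have hB0 : Tendsto (fun k => ((B ^ k) *ᵥ x0) i) atTop (nhds 0) := by
      have : ∀ k, ((B ^ k) *ᵥ x0) i = ∑ j, (B ^ k) i j * x0 j := fun k => rfl
      simp only [this]
      have h0 : (0 : ℝ) = ∑ _j : Fin N, 0 := by simp
      rw [h0]
      exact tendsto_finset_sum _ fun j _ => by simpa using (hent i j).mul_const (x0 j)
    have h2 : Tendsto (fun k => ((B ^ k) *ᵥ x0) i + (N:ℝ)⁻¹ * ∑ j, x0 j) atTop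
        (nhds ((N:ℝ)⁻¹ * ∑ j, x0 j)) := by
      simpa using hB0.add_const ((N:ℝ)⁻¹ * ∑ j, x0 j)
    refine h2.congr' ?_
    filter_upwards [Filter.eventually_ge_atTop 1] with k hk
    rw [hBpow k hk, Matrix.sub_mulVec]
    simp [hJv x0 i]
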